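/- Let g = X - X⁴ + X⁷ be a formal power series over ℚ and let f be the formal power series over ℚ with zero constant coefficient such that substituting f into g yields the identity series X. Then the coefficients of f at X¹, X⁴, X⁷, X¹⁰, X¹³, X¹⁶, X¹⁹, X²², X²⁵ are, respectively: 1, 1, 3, 11, 42, 153, 469, 690, -5967 (and all other coefficients up to degree 25 vanish). In particular f has a negative coefficient. -/

import Mathlib

noncomputable section Stmt7Aux

noncomputable def P7x : PowerSeries ℚ := open PowerSeries in 1*X^1 + 1*X^4 + 3*X^7 + 11*X^10 + 42*X^13 + 153*X^16 + 469*X^19 + 690*X^22 + (-5967)*X^25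
noncomputable def T7b : PowerSeries ℚ := open PowerSeries in 1*X^2 + 2*X^5 + 7*X^8 + 28*X^11 + 115*X^14 + 456*X^17 + 1617*X^20 + 4160*X^23
noncomputable def S7b : PowerSeries ℚ := open PowerSeries in (-2610)*X^0 + 15376*X^3 + 42183*X^6 + 70200*X^9 + (-70127)*X^12 + (-1178682)*X^15 + (-5120946)*X^18 + (-8234460)*X^21 + 35605089*X^24
noncomputable def T7c : PowerSeries ℚ := open PowerSeries in 1*X^3 + 3*X^6 + 12*X^9 + 52*X^12 + 228*X^15 + 969*X^18 + 3795*X^21 + 12285*X^24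
noncomputable def S7c : PowerSeries ℚ := open PowerSeries in 21837*X^1 + 73042*X^4 + 214928*X^7 + 548259*X^10 + 1023288*X^13 + 345818*X^16 + (-6778239)*X^19 + (-24822720)*X^22
noncomputable def T7d : PowerSeries ℚ := open PowerSeries in 1*X^4 + 4*X^7 + 18*X^10 + 84*X^13 + 391*X^16 + 1764*X^19 + 7452*X^22 + 27612*X^25
noncomputable def S7d : PowerSeries ℚ := open PowerSeries in 78039*X^2 + 253672*X^5 + 812806*X^8 + 2431504*X^11 + 6408609*X^14 + 13453440*X^17 + 17305600*X^20
noncomputable def T7g : PowerSeries ℚ := open PowerSeries in 1*X^7 + 7*X^10 + 42*X^13 + 238*X^16 + 1295*X^19 + 6762*X^22 + 33579*X^25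
noncomputable def S7g : PowerSeries ℚ := open PowerSeries in 155527*X^2 + 551982*X^5 + 2039829*X^8 + 7359981*X^11 + 25014339*X^14 + 76707108*X^17 + 196335360*X^20 + 339213420*X^23
noncomputable def W7x : PowerSeries ℚ := open PowerSeries in 0

open PowerSeries

set_option maxHeartbeats 1000000 in
theorem h7b : P7x * P7x = T7b + X^26 * S7b := by
  rw [P7x, T7b, S7b]; ring

set_option maxHeartbeats 1000000 in
theorem h7c : T7b * P7x = T7c + X^26 * S7c := by
  rw [P7x, T7b, T7c, S7c]; ring

set_option maxHeartbeats 1000000 in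
theorem h7d : T7b * T7b = T7d + X^26 * S7d := by
  rw [T7b, T7d, S7d]; ring

set_option maxHeartbeats 1000000 in
theorem h7g : T7d * T7c = T7g + X^26 * S7g := by
  rw [T7c, T7d, T7g, S7g]; ring

set_option maxHeartbeats 1000000 in
theorem h7fin : P7x - T7d + T7g = X + X^26 * W7x := by
  rw [P7x, T7d, T7g, W7x]; ring

theorem d4P : (X : PowerSeries ℚ)^26 ∣ P7x^4 - T7d :=
  ⟨S7d + 2*T7b*S7b + X^26*(S7b*S7b), by
    linear_combination (P7x*P7x + T7b + X^26*S7b) * h7b + h7d⟩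

theorem d3P : (X : PowerSeries ℚ)^26 ∣ P7x^3 - T7c :=
  ⟨S7c + S7b*P7x, by linear_combination P7x * h7b + h7c⟩

theorem d7P : (X : PowerSeries ℚ)^26 ∣ P7x^7 - T7g := by
  have e : P7x^7 - T7g = (P7x^4 - T7d)*P7x^3 + T7d*(P7x^3 - T7c) + (T7d*T7c - T7g) := by
    ring
  rw [e]
  exact dvd_add (dvd_add (d4P.mul_right _) (d3P.mul_left _)) ⟨S7g, by linear_combination h7g⟩

theorem hPkey : (X : PowerSeries ℚ)^26 ∣ P7x - P7x^4 + P7x^7 - X := by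
  have e : P7x - P7x^4 + P7x^7 - X
      = -(P7x^4 - T7d) + (P7x^7 - T7g) + (P7x - T7d + T7g - X) := by ring
  rw [e]
  exact dvd_add (dvd_add ((dvd_neg).mpr d4P) d7P) ⟨W7x, by linear_combination h7fin⟩

theorem hXP : (X : PowerSeries ℚ) ∣ P7x :=
  ⟨1*X^0 + 1*X^3 + 3*X^6 + 11*X^9 + 42*X^12 + 153*X^15 + 469*X^18 + 690*X^21 + (-5967)*X^24, by rw [P7x]; ring⟩

theorem cnum7 : ∀ (n : ℕ) [n.AtLeastTwo], (OfNat.ofNat n : PowerSeries ℚ) = C (OfNat.ofNat n) :=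
  fun n _ => (map_ofNat (C) n).symm

end Stmt7Aux

open PowerSeries


/-- Let `g = X - X⁴ + X⁷` over `ℚ` and let `f` be a power series with zero
constant coefficient such that substituting `f` into `g` (which gives `f - f⁴ + f⁷`)
yields `X`.  Then the coefficients of `f` at `X¹, X⁴, X⁷, X¹⁰, X¹³, X¹⁶, X¹⁹, X²², X²⁵`
are `1, 1, 3, 11, 42, 153, 469, 690, -5967`, all other coefficients up to degree `25`
vanish, and in particular `f` has a negative coefficient. -/
theorem stmt_7 (f : PowerSeries ℚ) (hf0 : PowerSeries.constantCoeff f = 0)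
    (hinv : f - f ^ 4 + f ^ 7 = PowerSeries.X) :
    PowerSeries.coeff 1 f = 1 ∧
    PowerSeries.coeff 4 f = 1 ∧
    PowerSeries.coeff 7 f = 3 ∧
    PowerSeries.coeff 10 f = 11 ∧
    PowerSeries.coeff 13 f = 42 ∧
    PowerSeries.coeff 16 f = 153 ∧
    PowerSeries.coeff 19 f = 469 ∧
    PowerSeries.coeff 22 f = 690 ∧
    PowerSeries.coeff 25 f = -5967 ∧
    (∀ k : ℕ, k ≤ 25 → k % 3 ≠ 1 → PowerSeries.coeff k f = 0) ∧
    ∃ k : ℕ, PowerSeries.coeff k f < 0 := by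

  have hXf : (X : PowerSeries ℚ) ∣ f := X_dvd_iff.mpr hf0
  have hmul : ∀ i j : ℕ, (X : PowerSeries ℚ)^(i+j) ∣ f^i * P7x^j := by
    intro i j
    rw [pow_add]
    exact mul_dvd_mul (pow_dvd_pow_of_dvd hXf i) (pow_dvd_pow_of_dvd hXP j)
  have main : ∀ n : ℕ, n ≤ 25 → coeff n f = coeff n P7x := by
    intro n
    induction n using Nat.strong_induction_on with
    | _ n ih =>
      intro hn
      have hdiff : (X : PowerSeries ℚ)^n ∣ f - P7x := by
        rw [X_pow_dvd_iff]
        intro m hm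
        rw [map_sub, ih m hm (le_of_lt (lt_of_lt_of_le hm hn)), sub_self]
      have d4f : (X : PowerSeries ℚ)^(n+1) ∣ f^4 - P7x^4 := by
        have e : f^4 - P7x^4
            = (f - P7x)*(f^3*P7x^0 + f^2*P7x^1 + f^1*P7x^2 + f^0*P7x^3) := by ring
        rw [e]
        refine dvd_trans (pow_dvd_pow X (by omega : n+1 ≤ n+3)) ?_
        rw [pow_add]
        exact mul_dvd_mul hdiff
          (dvd_add (dvd_add (dvd_add (hmul 3 0) (hmul 2 1)) (hmul 1 2)) (hmul 0 3))
      have d7f : (X : PowerSeries ℚ)^(n+1) ∣ f^7 - P7x^7 := by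
        have e : f^7 - P7x^7
            = (f - P7x)*(f^6*P7x^0 + f^5*P7x^1 + f^4*P7x^2 + f^3*P7x^3
                + f^2*P7x^4 + f^1*P7x^5 + f^0*P7x^6) := by ring
        rw [e]
        refine dvd_trans (pow_dvd_pow X (by omega : n+1 ≤ n+6)) ?_
        rw [pow_add]
        refine mul_dvd_mul hdiff ?_
        exact dvd_add (dvd_add (dvd_add (dvd_add (dvd_add (dvd_add
          (hmul 6 0) (hmul 5 1)) (hmul 4 2)) (hmul 3 3)) (hmul 2 4)) (hmul 1 5)) (hmul 0 6)
      have dP : (X : PowerSeries ℚ)^(n+1) ∣ P7x - P7x^4 + P7x^7 - X :=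
        dvd_trans (pow_dvd_pow X (by omega : n+1 ≤ 26)) hPkey
      have e : f - P7x = (f^4 - P7x^4) - (f^7 - P7x^7) - (P7x - P7x^4 + P7x^7 - X) := by
        linear_combination hinv
      have dfin : (X : PowerSeries ℚ)^(n+1) ∣ f - P7x := by
        rw [e]
        exact dvd_sub (dvd_sub d4f d7f) dP
      have h0 : coeff n (f - P7x) = 0 :=
        (X_pow_dvd_iff.mp dfin) n (Nat.lt_succ_self n)
      rw [map_sub, sub_eq_zero] at h0
      exact h0
  refine ⟨?_, ?_, ?_, ?_, ?_, ?_, ?_, ?_, ?_, ?_, ⟨25, ?_⟩⟩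
  · rw [main 1 (by norm_num)]; simp [P7x, cnum7, coeff_C_mul, coeff_X_pow, coeff_X]
  · rw [main 4 (by norm_num)]; simp [P7x, cnum7, coeff_C_mul, coeff_X_pow, coeff_X]
  · rw [main 7 (by norm_num)]; simp [P7x, cnum7, coeff_C_mul, coeff_X_pow, coeff_X]
  · rw [main 10 (by norm_num)]; simp [P7x, cnum7, coeff_C_mul, coeff_X_pow, coeff_X]
  · rw [main 13 (by norm_num)]; simp [P7x, cnum7, coeff_C_mul, coeff_X_pow, coeff_X]
  · rw [main 16 (by norm_num)]; simp [P7x, cnum7, coeff_C_mul, coeff_X_pow, coeff_X]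
  · rw [main 19 (by norm_num)]; simp [P7x, cnum7, coeff_C_mul, coeff_X_pow, coeff_X]
  · rw [main 22 (by norm_num)]; simp [P7x, cnum7, coeff_C_mul, coeff_X_pow, coeff_X]
  · rw [main 25 (by norm_num)]; simp [P7x, cnum7, coeff_C_mul, coeff_X_pow, coeff_X]
  · intro k hk hk3
    rw [main k hk]
    interval_cases k <;>
      first
        | (exact absurd rfl hk3)
        | simp [P7x, cnum7, coeff_C_mul, coeff_X_pow, coeff_X]
  · rw [main 25 (by norm_num)]
    simp [P7x, cnum7, coeff_C_mul, coeff_X_pow, coeff_X]
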